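/- For every η > 0 there exists M such that for all m ≥ M, p(⌊m²(1+η)/8⌋) > 2^m · 4/(3√3·m^{3/2}). -/

import Mathlib

open Finset Real Filter

open Finset

lemma boundaries_card (n : ℕ) (hn : 1 ≤ n) (s : Finset (Fin (n-1))) :
    ((compositionAsSetEquiv n).symm s).boundaries.card = s.card + 2 := by
  classical
  have hg : ∀ j : Fin (n-1), (j:ℕ)+1 < n+1 := fun j => by have := j.2; omega
  set g : Fin (n-1) → Fin (n+1) := fun j => ⟨(j:ℕ)+1, hg j⟩ with hgdef
  have hB : ((compositionAsSetEquiv n).symm s).boundaries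
      = insert 0 (insert (Fin.last n) (s.image g)) := by
    ext i
    simp only [compositionAsSetEquiv, Equiv.coe_fn_symm_mk, Set.toFinset_setOf,
      mem_filter, mem_univ, true_and, mem_insert, mem_image]
    constructor
    · rintro (h | h | ⟨j, hj, hij⟩)
      · exact Or.inl h
      · exact Or.inr (Or.inl h)
      · refine Or.inr (Or.inr ⟨j, hj, ?_⟩)
        rw [hgdef]; exact Fin.ext hij.symm
    · rintro (h | h | ⟨j, hj, rfl⟩)
      · exact Or.inl h
      · exact Or.inr (Or.inl h)
      · exact Or.inr (Or.inr ⟨j, hj, rfl⟩)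
  rw [hB]
  have h0 : (0 : Fin (n+1)) ∉ insert (Fin.last n) (s.image g) := by
    simp only [mem_insert, mem_image, not_or, hgdef, not_exists]
    refine ⟨?_, ?_⟩
    · intro h
      have := congrArg Fin.val h
      simp [Fin.val_last] at this
      omega
    · rintro j ⟨hj, h⟩
      have := congrArg Fin.val h
      simp at this
  have h1 : Fin.last n ∉ s.image g := by
    simp only [mem_image, hgdef, not_exists]
    rintro j ⟨hj, h⟩
    have := congrArg Fin.val h
    simp [Fin.val_last] at this
    have := j.2; omega
  have hginj : Function.Injective g := by
    intro a b hab
    have := congrArg Fin.val hab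
    simp [hgdef] at this
    exact Fin.ext this
  rw [card_insert_of_notMem h0, card_insert_of_notMem h1, card_image_of_injective _ hginj]

/-- The partition function: the number of partitions of `n`. -/
def p (n : ℕ) : ℕ := Fintype.card (Nat.Partition n)

lemma choose_le_factorial_mul_p (n k : ℕ) (hk : 1 ≤ k) (hkn : k ≤ n) :
    (n-1).choose (k-1) ≤ k.factorial * p n := by
  classical
  have hn : 1 ≤ n := hk.trans hkn
  set Φ : Finset (Fin (n-1)) → Composition n :=
    fun s => ((compositionAsSetEquiv n).symm s).toComposition with hΦ
  have hΦinj : Function.Injective Φ := by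
    intro a b hab
    exact (compositionAsSetEquiv n).symm.injective
      ((compositionEquiv n).symm.injective (hab : (compositionEquiv n).symm _ = _))
  have hΦlen : ∀ s : Finset (Fin (n-1)), (Φ s).length = s.card + 1 := by
    intro s
    rw [hΦ]
    rw [CompositionAsSet.toComposition_length, CompositionAsSet.length,
      boundaries_card n hn s]
    omega
  set A : Finset (Finset (Fin (n-1))) := Finset.powersetCard (k-1) univ with hA
  have hAcard : A.card = (n-1).choose (k-1) := by
    rw [hA, Finset.card_powersetCard, card_univ, Fintype.card_fin]
  have hcardA : ∀ s ∈ A, s.card = k - 1 := fun s hs => (Finset.mem_powersetCard.mp hs).2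
  set P : Finset (Fin (n-1)) → Nat.Partition n :=
    fun s => Nat.Partition.ofComposition n (Φ s) with hP
  -- fibers of P on A have size at most k!
  have hfiber : ∀ μ ∈ A.image P, (A.filter (fun s => P s = μ)).card ≤ k.factorial := by
    intro μ hμ
    obtain ⟨s₀, hs₀A, hs₀⟩ := Finset.mem_image.mp hμ
    have hparts : μ.parts.card = k := by
      rw [← hs₀, hP]
      simp only [Nat.Partition.ofComposition_parts, Multiset.coe_card]
      rw [Composition.blocks_length, hΦlen, hcardA s₀ hs₀A]
      omega
    have hinj : Set.InjOn (fun s => (Φ s).blocks) (A.filter (fun s => P s = μ)) := by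
      intro a _ b _ hab
      exact hΦinj (Composition.ext hab)
    calc (A.filter (fun s => P s = μ)).card
        ≤ (μ.parts.toList.permutations.toFinset).card := by
          apply Finset.card_le_card_of_injOn (fun s => (Φ s).blocks) _ hinj
          intro a ha
          simp only [Finset.mem_coe, List.mem_toFinset, List.mem_permutations]
          have : P a = μ := (Finset.mem_filter.mp ha).2
          have hpm : (↑(Φ a).blocks : Multiset ℕ) = μ.parts := by
            rw [← this, hP]; rfl
          rw [← Multiset.coe_eq_coe, hpm, Multiset.coe_toList]
      _ ≤ μ.parts.toList.permutations.length := List.toFinset_card_le _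
      _ = (μ.parts.toList.length).factorial := List.length_permutations _
      _ = k.factorial := by rw [Multiset.length_toList, hparts]
  calc (n-1).choose (k-1) = A.card := hAcard.symm
    _ ≤ k.factorial * (A.image P).card := Finset.card_le_mul_card_image A _ hfiber
    _ ≤ k.factorial * p n := by
        apply Nat.mul_le_mul_left
        exact (Finset.card_le_univ _).trans_eq Finset.card_univ

lemma p_lower (n k : ℕ) (hk : 1 ≤ k) (hkn : k ≤ n) :
    ((n - k + 1 : ℕ) : ℝ)^(k-1) / ((k-1).factorial * k.factorial) ≤ (p n : ℝ) := by
  have h1 : (((n-1) + 1 - (k-1) : ℕ) ^ (k-1) : ℝ) / (k-1).factorial ≤ (n-1).choose (k-1) :=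
    Nat.pow_le_choose (k-1) (n-1)
  have hNe : ((n-1) + 1 - (k-1) : ℕ) = n - k + 1 := by omega
  rw [hNe] at h1
  have h2 : ((n-1).choose (k-1) : ℝ) ≤ (k.factorial : ℝ) * (p n : ℝ) := by
    have := choose_le_factorial_mul_p n k hk hkn
    exact_mod_cast this
  have hkfac : (0:ℝ) < k.factorial := by positivity
  have hkfac' : (0:ℝ) < (k-1).factorial := by positivity
  rw [div_le_iff₀ (by positivity)]
  rw [div_le_iff₀ (by positivity)] at h1
  calc ((n - k + 1 : ℕ) : ℝ)^(k-1) ≤ ((n-1).choose (k-1) : ℝ) * (k-1).factorial := by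
        exact_mod_cast h1
    _ ≤ ((k.factorial : ℝ) * (p n : ℝ)) * (k-1).factorial := by
        apply mul_le_mul_of_nonneg_right h2 hkfac'.le
    _ = (p n : ℝ) * ((k-1).factorial * k.factorial) := by ring

lemma factorial_le_stirling (k : ℕ) (hk : 1 ≤ k) :
    (k.factorial : ℝ) ≤ Real.exp 1 * Real.sqrt k * ((k : ℝ) / Real.exp 1)^k := by
  obtain ⟨j, rfl⟩ : ∃ j, k = j + 1 := ⟨k - 1, by omega⟩
  have h : Stirling.stirlingSeq (j+1) ≤ Stirling.stirlingSeq (0+1) :=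
    Stirling.stirlingSeq'_antitone (Nat.zero_le j)
  rw [show (0:ℕ)+1 = 1 from rfl, Stirling.stirlingSeq_one] at h
  set k := j + 1
  have hk0 : (0:ℝ) < (k:ℝ) := by positivity
  have hd : (0:ℝ) < Real.sqrt (2*(k:ℝ)) * ((k:ℝ)/Real.exp 1)^k := by positivity
  rw [Stirling.stirlingSeq, div_le_iff₀ hd] at h
  calc (k.factorial : ℝ) ≤ Real.exp 1 / Real.sqrt 2 * (Real.sqrt (2*(k:ℝ)) * ((k:ℝ)/Real.exp 1)^k) := h
    _ = Real.exp 1 * Real.sqrt k * ((k : ℝ) / Real.exp 1)^k := by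
        rw [Real.sqrt_mul (by norm_num : (0:ℝ) ≤ 2)]
        have h2 : Real.sqrt 2 ≠ 0 := by positivity
        field_simp

noncomputable def bconst : ℝ := (9 * Real.exp 1 ^ 2 / 8) ^ ((1:ℝ)/3) / 2

lemma base_gt_eight : (8:ℝ) < 9 * Real.exp 1 ^ 2 / 8 := by
  nlinarith [Real.exp_one_gt_d9]

lemma one_lt_bconst : 1 < bconst := by
  have h8 : (0:ℝ) < 8 := by norm_num
  have h : (8:ℝ) ^ ((1:ℝ)/3) < (9 * Real.exp 1 ^ 2 / 8) ^ ((1:ℝ)/3) :=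
    Real.rpow_lt_rpow (by norm_num) base_gt_eight (by norm_num)
  have h2 : (8:ℝ) ^ ((1:ℝ)/3) = 2 := by
    rw [show (8:ℝ) = 2 ^ (3:ℕ) by norm_num, ← Real.rpow_natCast 2 3,
      ← Real.rpow_mul (by norm_num)]
    norm_num
  rw [h2] at h
  rw [bconst, lt_div_iff₀ (by norm_num)]
  linarith

lemma eventually_b_pow : ∀ᶠ m : ℕ in atTop, Real.exp 5 * (m:ℝ)^2 < bconst ^ m := by
  have hb : 1 < bconst := one_lt_bconst
  have ht := tendsto_pow_const_div_const_pow_of_one_lt 2 hb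
  have hlt : ∀ᶠ m : ℕ in atTop, ((m:ℝ)^2 / bconst ^ m) < Real.exp (-5) :=
    ht.eventually (gt_mem_nhds (by positivity))
  filter_upwards [hlt] with m hm
  have hbp : (0:ℝ) < bconst ^ m := by positivity
  rw [div_lt_iff₀ hbp] at hm
  rw [Real.exp_neg] at hm
  calc Real.exp 5 * (m:ℝ)^2 < Real.exp 5 * ((Real.exp 5)⁻¹ * bconst ^ m) :=
        mul_lt_mul_of_pos_left hm (Real.exp_pos 5)
    _ = bconst ^ m := by field_simp

set_option maxHeartbeats 2000000 in
theorem p_floor_eta (η : ℝ) (hη : 0 < η) :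
    ∃ M : ℕ, ∀ m : ℕ, M ≤ m →
      (2 : ℝ) ^ m * 4 / (3 * Real.sqrt 3 * (m : ℝ) ^ ((3 : ℝ) / 2)) <
        (p ⌊(m : ℝ) ^ 2 * (1 + η) / 8⌋₊ : ℝ) := by
  have hev : ∀ᶠ m : ℕ in atTop,
      (2 : ℝ) ^ m * 4 / (3 * Real.sqrt 3 * (m : ℝ) ^ ((3 : ℝ) / 2)) <
        (p ⌊(m : ℝ) ^ 2 * (1 + η) / 8⌋₊ : ℝ) := by
    have E1 : ∀ᶠ m : ℕ in atTop, (8:ℝ) ≤ (m:ℝ) :=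
      tendsto_natCast_atTop_atTop.eventually_ge_atTop 8
    have E2 : ∀ᶠ m : ℕ in atTop, 16/η ≤ (m:ℝ) :=
      tendsto_natCast_atTop_atTop.eventually_ge_atTop _
    filter_upwards [E1, E2, eventually_b_pow] with m h8 h16 hb3
    set x : ℝ := (m:ℝ) with hxdef
    have hx0 : (0:ℝ) < x := by linarith only [h8]
    set E : ℝ := Real.exp 1 with hE
    have hE0 : (0:ℝ) < E := Real.exp_pos 1
    set k : ℕ := m / 3 + 1 with hkdef
    set n : ℕ := ⌊x ^ 2 * (1 + η) / 8⌋₊ with hndef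
    have hk1 : 1 ≤ k := by omega
    have hkx : (k:ℝ) ≤ x/3 + 1 := by
      have h1 : ((m/3 : ℕ):ℝ) ≤ (m:ℝ)/3 := Nat.cast_div_le
      rw [hkdef]
      push_cast
      linarith only [h1]
    have hxk : x/3 < (k:ℝ) := by
      have h1 : m < 3 * (m/3+1) := by omega
      have h2 : (m:ℝ) < 3 * ((m/3+1 : ℕ):ℝ) := by exact_mod_cast h1
      rw [hkdef]
      push_cast at h2 ⊢
      linarith only [h2]
    have hkxle : (k:ℝ) ≤ x := by linarith only [hkx, h8]
    have hηx : 16 ≤ η * x := by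
      rw [div_le_iff₀ hη] at h16; linarith only [h16]
    have hkn : k ≤ n := by
      apply Nat.le_floor
      have hxx : x ≤ x^2/8 := by linarith only [h8, mul_nonneg (by linarith only [h8] : (0:ℝ) ≤ x) (by linarith only [h8] : (0:ℝ) ≤ x - 8)]
      have h2 : x^2/8 ≤ x^2*(1+η)/8 := by linarith only [mul_nonneg hη.le (sq_nonneg x)]
      calc (k:ℝ) ≤ x := hkxle
        _ ≤ x^2/8 := hxx
        _ ≤ x^2*(1+η)/8 := h2
    have hnR : x^2*(1+η)/8 - 1 < (n:ℝ) := Nat.sub_one_lt_floor _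
    have hQ : x^2/8 ≤ ((n - k + 1 : ℕ):ℝ) := by
      have hc : ((n - k + 1 : ℕ):ℝ) = (n:ℝ) - (k:ℝ) + 1 := by
        push_cast [hkn]; ring
      rw [hc]
      linarith only [hnR, hkx, h8, mul_le_mul_of_nonneg_right hηx hx0.le]
    have hplow := p_lower n k hk1 hkn
    have hfacmono : ((k-1).factorial : ℝ) ≤ (k.factorial : ℝ) := by
      exact_mod_cast Nat.factorial_le (by omega : k - 1 ≤ k)
    have hfacpos : (0:ℝ) < (k.factorial : ℝ) := by positivity
    have hfacpos' : (0:ℝ) < ((k-1).factorial : ℝ) := by positivity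
    have hA0 : (0:ℝ) < x^2/8 := by positivity
    have key1 : (x^2/8)^(k-1) / ((k.factorial:ℝ) * k.factorial) ≤ (p n : ℝ) := by
      refine le_trans ?_ hplow
      apply div_le_div₀ (by positivity) ?_ (by positivity) ?_
      · exact pow_le_pow_left₀ hA0.le hQ _
      · exact mul_le_mul_of_nonneg_right hfacmono hfacpos.le
    have hst := factorial_le_stirling k hk1
    set t : ℝ := x/3 * Real.exp (3/x) / E with htdef
    have ht0 : (0:ℝ) < t := by positivity
    have hx3 : (0:ℝ) < x/3 := by linarith only [h8]
    have hkt : (k:ℝ)/E ≤ t := by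
      rw [htdef]
      have h1 : 3/x + 1 ≤ Real.exp (3/x) := Real.add_one_le_exp (3/x)
      have h2 : (k:ℝ) ≤ x/3 * Real.exp (3/x) := by
        have h3 : x/3 * (3/x + 1) = 1 + x/3 := by field_simp
        have h4 := mul_le_mul_of_nonneg_left h1 hx3.le
        rw [h3] at h4
        linarith only [h4, hkx]
      exact div_le_div_of_nonneg_right h2 hE0.le
    have hst2 : (k.factorial:ℝ) ≤ E * Real.sqrt x * t^k := by
      refine hst.trans ?_
      have h1 : Real.sqrt (k:ℝ) ≤ Real.sqrt x := Real.sqrt_le_sqrt hkxle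
      have h2 : ((k:ℝ)/E)^k ≤ t^k := pow_le_pow_left₀ (by positivity) hkt k
      have h0 : (0:ℝ) ≤ Real.sqrt (k:ℝ) := Real.sqrt_nonneg _
      gcongr
    have htk0 : (0:ℝ) < t^k := pow_pos ht0 k
    have key2 : (x^2/8)^(k-1) / (E * Real.sqrt x * t^k)^2 ≤ (p n : ℝ) := by
      refine le_trans ?_ key1
      have hd : (k.factorial:ℝ) * k.factorial ≤ (E * Real.sqrt x * t^k)^2 := by
        have := mul_le_mul hst2 hst2 hfacpos.le (by positivity)
        calc (k.factorial:ℝ) * k.factorial ≤ (E * Real.sqrt x * t^k) * (E * Real.sqrt x * t^k) := this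
          _ = (E * Real.sqrt x * t^k)^2 := (sq _).symm
      apply div_le_div_of_nonneg_left (by positivity) (by positivity) hd -- check name/arg order
    -- identity
    have hsq : Real.sqrt x ^ 2 = x := Real.sq_sqrt hx0.le
    have hkk : k - 1 + 1 = k := by omega
    have hApow : (x^2/8)^k = (x^2/8)^(k-1) * (x^2/8) := by
      conv_lhs => rw [← hkk]
      rw [pow_succ]
    have ht2k : (t^2)^k = (t^k)^2 := by
      rw [← pow_mul, ← pow_mul, Nat.mul_comm]
    have Hid : (x^2/8)^(k-1) / (E * Real.sqrt x * t^k)^2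
        = 8/(E^2*x^3) * ((x^2/8)/t^2)^k := by
      have expand : (E * Real.sqrt x * t^k)^2 = E^2 * x * (t^k)^2 := by
        rw [mul_pow, mul_pow, hsq]
      rw [expand, show ((x^2/8)/t^2)^k = (x^2/8)^k/(t^k)^2 from by rw [div_pow, ht2k], hApow]
      have h1 : E ≠ 0 := hE0.ne'
      have h2 : x ≠ 0 := hx0.ne'
      have h3 : (t^k) ≠ 0 := htk0.ne'
      field_simp
    have hexp2 : Real.exp (3/x) ^ 2 = Real.exp (6/x) := by
      rw [sq, ← Real.exp_add]
      congr 1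
      ring
    have ht2 : t^2 = x^2 * Real.exp (6/x) / (9*E^2) := by
      rw [htdef, div_pow, mul_pow, div_pow, hexp2]
      ring
    have ratio : (x^2/8)/t^2 = (9*E^2/8) * Real.exp (-(6/x)) := by
      rw [ht2, Real.exp_neg]
      have h4 : Real.exp (6/x) ≠ 0 := (Real.exp_pos _).ne'
      field_simp
    have hrk : (9*E^2/8)^k * Real.exp (-3:ℝ) ≤ ((x^2/8)/t^2)^k := by
      rw [ratio, mul_pow]
      apply mul_le_mul_of_nonneg_left ?_ (by positivity)
      rw [← Real.exp_nat_mul]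
      apply Real.exp_le_exp.mpr
      have h6 : 6*(k:ℝ) ≤ 3*x := by linarith only [hkx, h8]
      have h7 : (k:ℝ) * -(6/x) = -(6*(k:ℝ)/x) := by ring
      rw [h7, neg_le_neg_iff, div_le_iff₀ hx0]
      linarith only [h6]
    have hbase1 : (1:ℝ) ≤ 9*E^2/8 := le_of_lt (lt_trans (by norm_num) base_gt_eight)
    have hbase0 : (0:ℝ) ≤ 9*E^2/8 := by linarith only [hbase1]
    have hpowk : (2:ℝ)^m * bconst^m ≤ (9*E^2/8)^k := by
      have hbc0 : (0:ℝ) < bconst := by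
        rw [bconst]; positivity
      calc (2:ℝ)^m * bconst^m = (2*bconst)^m := (mul_pow 2 bconst m).symm
        _ = ((9*E^2/8) ^ ((1:ℝ)/3))^m := by rw [show (2:ℝ)*bconst = (9*E^2/8)^((1:ℝ)/3) by rw [bconst, hE]; ring]
        _ = ((9*E^2/8) ^ ((1:ℝ)/3))^((m:ℕ):ℝ) := (Real.rpow_natCast _ m).symm
        _ = (9*E^2/8) ^ ((1:ℝ)/3 * (m:ℕ)) := (Real.rpow_mul hbase0 _ _).symm
        _ ≤ (9*E^2/8) ^ ((k:ℕ):ℝ) := by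
            apply Real.rpow_le_rpow_of_exponent_le hbase1
            rw [← hxdef]
            linarith only [hxk]
        _ = (9*E^2/8)^k := Real.rpow_natCast _ k
    have c0 : (0:ℝ) < 8/(E^2*x^3) * Real.exp (-3:ℝ) := by positivity
    have step1 : 8/(E^2*x^3) * Real.exp (-3:ℝ) * ((2:ℝ)^m * bconst^m) ≤ (p n : ℝ) := by
      calc 8/(E^2*x^3) * Real.exp (-3:ℝ) * ((2:ℝ)^m * bconst^m)
          ≤ 8/(E^2*x^3) * Real.exp (-3:ℝ) * (9*E^2/8)^k :=
            mul_le_mul_of_nonneg_left hpowk c0.le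
        _ = 8/(E^2*x^3) * ((9*E^2/8)^k * Real.exp (-3:ℝ)) := by ring
        _ ≤ 8/(E^2*x^3) * ((x^2/8)/t^2)^k :=
            mul_le_mul_of_nonneg_left hrk (by positivity)
        _ = (x^2/8)^(k-1) / (E * Real.sqrt x * t^k)^2 := Hid.symm
        _ ≤ (p n : ℝ) := key2
    have hE2 : E^2 = Real.exp 2 := by
      rw [hE, ← Real.exp_nat_mul]
      norm_num
    have hexpid : Real.exp (-3:ℝ) * Real.exp 5 = Real.exp 2 := by
      rw [← Real.exp_add]; norm_num
    have step2 : (2:ℝ)^m * (8/x) < 8/(E^2*x^3) * Real.exp (-3:ℝ) * ((2:ℝ)^m * bconst^m) := by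
      have hid2 : 8/(E^2*x^3) * Real.exp (-3:ℝ) * ((2:ℝ)^m * (Real.exp 5 * x^2)) = (2:ℝ)^m * (8/x) := by
        rw [hE2]
        have h4 : Real.exp (2:ℝ) ≠ 0 := (Real.exp_pos _).ne'
        have h2 : x ≠ 0 := hx0.ne'
        field_simp
        linear_combination hexpid
      rw [← hid2]
      apply mul_lt_mul_of_pos_left ?_ c0
      apply mul_lt_mul_of_pos_left ?_ (by positivity : (0:ℝ) < (2:ℝ)^m)
      exact hb3
    have hsqrtx1 : (1:ℝ) ≤ Real.sqrt x := by
      rw [show (1:ℝ) = Real.sqrt 1 by simp]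
      exact Real.sqrt_le_sqrt (by linarith only [h8])
    have hsqrt31 : (1:ℝ) ≤ Real.sqrt 3 := by
      rw [show (1:ℝ) = Real.sqrt 1 by simp]
      exact Real.sqrt_le_sqrt (by norm_num)
    have hx32 : x ^ ((3:ℝ)/2) = x * Real.sqrt x := by
      rw [show (3:ℝ)/2 = 1 + 1/2 by norm_num, Real.rpow_add hx0, Real.rpow_one,
        ← Real.sqrt_eq_rpow]
    have step0 : (2:ℝ)^m * 4 / (3 * Real.sqrt 3 * x^((3:ℝ)/2)) ≤ (2:ℝ)^m * (8/x) := by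
      rw [hx32, mul_div_assoc]
      apply mul_le_mul_of_nonneg_left ?_ (by positivity : (0:ℝ) ≤ (2:ℝ)^m)
      rw [div_le_div_iff₀ (by positivity) hx0]
      have hs : (1:ℝ) ≤ Real.sqrt 3 * Real.sqrt x := by
        nlinarith only [hsqrt31, hsqrtx1, Real.sqrt_nonneg (3:ℝ)]
      have h24 : x ≤ x * (Real.sqrt 3 * Real.sqrt x) := le_mul_of_one_le_right hx0.le hs
      linarith only [h24, hx0]
    exact lt_of_le_of_lt step0 (lt_of_lt_of_le step2 step1)
  exact eventually_atTop.mp hev
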